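/- Let n ≥ 5 with n−1 even, let x ∈ [0,1]^n, and let T* ⊆ {1,…,n−1} satisfy properties (P1)–(P4). Then the following system of linear inequalities has a solution z = (z_1,…,z_{n−1}) ∈ ℝ^{n−1}: z_i ≥ m_i for i ∈ T* ∪ (T*+1); z_i ≥ M_i for i ∈ {1,…,n−1} ∖ (T* ∪ (T*+1)); z_i ≤ M_i for all i ∈ {1,…,n−1}; z_i + z_{i+1} ≥ M'_i for i ∈ T*; and m'_i ≤ z_i + z_{i+1} ≤ M'_i for i ∈ {1,…,n−1} ∖ T* (index i+1 modulo n−1). -/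

import Mathlib

open Finset

/-- Cyclic successor on the rim `{1, …, n-1}` of the wheel `W_{n-1}`. -/
def wsucc (n i : ℕ) : ℕ := if i = n - 1 then 1 else i + 1

/-- The dual bound `φ(T)`. -/
noncomputable def phiW (n : ℕ) (x : ℕ → ℝ) (T : Finset ℕ) : ℝ :=
  ∑ i ∈ Finset.Icc 1 (n - 1) \ T, max 0 (x i + x (wsucc n i) - 1) +
  ∑ i ∈ Finset.Icc 1 (n - 1) \ (T ∪ T.image (wsucc n)), max 0 (x i + x n - 1) +
  ∑ i ∈ T, max 0 (x i + x (wsucc n i) + x n - 1)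

/-- `Φ* = max{φ(T) : T ⊆ {1,…,n-1}, T ∩ (T+1) = ∅}`. -/
noncomputable def phiStarW (n : ℕ) (x : ℕ → ℝ) : ℝ :=
  ((Finset.Icc 1 (n - 1)).powerset.filter
      (fun T => T ∩ T.image (wsucc n) = ∅)).sup'
    ⟨∅, by simp⟩ (phiW n x)

/-- Cyclic predecessor on the rim `{1, …, n-1}` of the wheel `W_{n-1}`. -/
def wpred (n i : ℕ) : ℕ := if i = 1 then n - 1 else i - 1

noncomputable def mW (n : ℕ) (x : ℕ → ℝ) (i : ℕ) : ℝ := max 0 (x i - x n)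

noncomputable def MW (n : ℕ) (x : ℕ → ℝ) (i : ℕ) : ℝ := min (x i) (1 - x n)

noncomputable def m'W (n : ℕ) (x : ℕ → ℝ) (i : ℕ) : ℝ := min 1 (x i + x (wsucc n i)) - x n

noncomputable def M'W (n : ℕ) (x : ℕ → ℝ) (i : ℕ) : ℝ := max 1 (x i + x (wsucc n i)) - x n

/-- The system of linear inequalities (1)–(6) for the vector `z`. -/
def zSystem (n : ℕ) (x : ℕ → ℝ) (T : Finset ℕ) (z : ℕ → ℝ) : Prop :=
  (∀ i ∈ T ∪ T.image (wsucc n), mW n x i ≤ z i) ∧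
  (∀ i ∈ Finset.Icc 1 (n - 1) \ (T ∪ T.image (wsucc n)), MW n x i ≤ z i) ∧
  (∀ i ∈ Finset.Icc 1 (n - 1), z i ≤ MW n x i) ∧
  (∀ i ∈ T, M'W n x i ≤ z i + z (wsucc n i)) ∧
  (∀ i ∈ Finset.Icc 1 (n - 1) \ T,
      m'W n x i ≤ z i + z (wsucc n i) ∧ z i + z (wsucc n i) ≤ M'W n x i)


/-- inverse of the natural map `ℕ → ZMod (n-1)` on `{1,…,n-1}` -/
def posW (n : ℕ) (v : ZMod (n - 1)) : ℕ := if v.val = 0 then n - 1 else v.val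

section Infra

variable {n : ℕ} (hn : 5 ≤ n)

lemma nz (hn : 5 ≤ n) : NeZero (n - 1) := ⟨by omega⟩

lemma valNat (hn : 5 ≤ n) {a : ℕ} (ha : a ≤ n - 1) :
    ((a : ZMod (n - 1))).val = if a = n - 1 then 0 else a := by
  haveI := nz hn
  split_ifs with h
  · subst h; simp [ZMod.natCast_self]
  · exact ZMod.val_cast_of_lt (by omega)

lemma castEq (hn : 5 ≤ n) {a b : ℕ} (ha : a ≤ n - 1) (hb : b ≤ n - 1)
    (h : (a : ZMod (n - 1)) = (b : ZMod (n - 1))) :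
    a = b ∨ (a = n - 1 ∧ b = 0) ∨ (a = 0 ∧ b = n - 1) := by
  have := congrArg ZMod.val h
  rw [valNat hn ha, valNat hn hb] at this
  split_ifs at this <;> omega

lemma castEq2 (hn : 5 ≤ n) {a b : ℕ} (ha : a ≤ 2 * (n - 1)) (hb : b ≤ 2 * (n - 1))
    (h : (a : ZMod (n - 1)) = (b : ZMod (n - 1))) :
    a = b ∨ a = b + (n - 1) ∨ b = a + (n - 1) ∨ a = b + 2 * (n - 1) ∨ b = a + 2 * (n - 1) := by
  have red : ∀ c : ℕ, c ≤ 2 * (n-1) → ∃ c' : ℕ, c' ≤ n - 1 ∧ (c = c' ∨ c = c' + (n-1)) ∧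
      (c : ZMod (n-1)) = (c' : ZMod (n-1)) := by
    intro c hc
    rcases le_or_gt c (n-1) with h1 | h1
    · exact ⟨c, h1, Or.inl rfl, rfl⟩
    · refine ⟨c - (n-1), by omega, Or.inr (by omega), ?_⟩
      conv_lhs => rw [show c = (c - (n-1)) + (n-1) by omega]
      push_cast [ZMod.natCast_self]; ring
  obtain ⟨a', ha', haa, hca⟩ := red a ha
  obtain ⟨b', hb', hbb, hcb⟩ := red b hb
  rw [hca, hcb] at h
  have h5 : 5 ≤ n := hn
  rcases castEq hn ha' hb' h with h' | h' | h' <;> omega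

lemma posW_mem (hn : 5 ≤ n) (v : ZMod (n-1)) : posW n v ∈ Icc 1 (n - 1) := by
  haveI := nz hn
  unfold posW; split_ifs with h
  · simp; omega
  · have := ZMod.val_lt v
    simp only [mem_Icc]; omega

lemma cast_posW (hn : 5 ≤ n) (v : ZMod (n-1)) : ((posW n v : ℕ) : ZMod (n - 1)) = v := by
  haveI := nz hn
  unfold posW; split_ifs with h
  · rw [ZMod.natCast_self]
    exact ((ZMod.val_eq_zero v).mp h).symm
  · exact ZMod.natCast_rightInverse v

lemma posW_cast (hn : 5 ≤ n) {i : ℕ} (hi : i ∈ Icc 1 (n-1)) :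
    posW n ((i : ℕ) : ZMod (n - 1)) = i := by
  haveI := nz hn
  simp only [mem_Icc] at hi
  unfold posW
  rw [valNat hn hi.2]
  split_ifs with h1 h2 <;> omega

lemma posW_inj (hn : 5 ≤ n) {v w : ZMod (n-1)} (h : posW n v = posW n w) : v = w := by
  have := congrArg (fun a : ℕ => ((a : ℕ) : ZMod (n-1))) h
  simpa [cast_posW hn] using this

lemma wsucc_eq (hn : 5 ≤ n) {i : ℕ} (hi : i ∈ Icc 1 (n-1)) :
    wsucc n i = posW n ((i : ZMod (n-1)) + 1) := by
  simp only [mem_Icc] at hi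
  unfold wsucc
  split_ifs with h
  · subst h
    have : ((n - 1 : ℕ) : ZMod (n-1)) + 1 = ((1 : ℕ) : ZMod (n-1)) := by
      rw [ZMod.natCast_self]; push_cast; ring
    rw [this, posW_cast hn (by simp only [mem_Icc]; omega)]
  · have : ((i : ℕ) : ZMod (n-1)) + 1 = ((i + 1 : ℕ) : ZMod (n-1)) := by push_cast; ring
    rw [this, posW_cast hn (by simp only [mem_Icc]; omega)]

lemma wpred_eq (hn : 5 ≤ n) {i : ℕ} (hi : i ∈ Icc 1 (n-1)) :
    wpred n i = posW n ((i : ZMod (n-1)) - 1) := by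
  simp only [mem_Icc] at hi
  unfold wpred
  split_ifs with h
  · subst h
    have : ((1 : ℕ) : ZMod (n-1)) - 1 = ((0 : ℕ) : ZMod (n-1)) := by push_cast; ring
    rw [this]
    unfold posW
    rw [valNat hn (by omega)]
    simp
  · have : ((i : ℕ) : ZMod (n-1)) - 1 = ((i - 1 : ℕ) : ZMod (n-1)) := by
      have : i = (i - 1) + 1 := by omega
      rw [this]; push_cast; ring_nf
    rw [this, posW_cast hn (by simp only [mem_Icc]; omega)]

lemma wsucc_posW (hn : 5 ≤ n) (v : ZMod (n-1)) :
    wsucc n (posW n v) = posW n (v + 1) := by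
  rw [wsucc_eq hn (posW_mem hn v), cast_posW hn]

lemma wpred_posW (hn : 5 ≤ n) (v : ZMod (n-1)) :
    wpred n (posW n v) = posW n (v - 1) := by
  rw [wpred_eq hn (posW_mem hn v), cast_posW hn]

lemma wsucc_mem (hn : 5 ≤ n) {i : ℕ} (hi : i ∈ Icc 1 (n-1)) : wsucc n i ∈ Icc 1 (n-1) := by
  rw [wsucc_eq hn hi]; exact posW_mem hn _

lemma wpred_mem (hn : 5 ≤ n) {i : ℕ} (hi : i ∈ Icc 1 (n-1)) : wpred n i ∈ Icc 1 (n-1) := by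
  rw [wpred_eq hn hi]; exact posW_mem hn _

lemma wpred_wsucc (hn : 5 ≤ n) {i : ℕ} (hi : i ∈ Icc 1 (n-1)) : wpred n (wsucc n i) = i := by
  rw [wsucc_eq hn hi, wpred_posW hn]
  simpa using posW_cast hn hi

lemma wsucc_wpred (hn : 5 ≤ n) {i : ℕ} (hi : i ∈ Icc 1 (n-1)) : wsucc n (wpred n i) = i := by
  rw [wpred_eq hn hi, wsucc_posW hn]
  simpa using posW_cast hn hi

lemma wsucc_injOn (hn : 5 ≤ n) {i j : ℕ} (hi : i ∈ Icc 1 (n-1)) (hj : j ∈ Icc 1 (n-1))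
    (h : wsucc n i = wsucc n j) : i = j := by
  have := congrArg (wpred n) h
  rwa [wpred_wsucc hn hi, wpred_wsucc hn hj] at this

lemma wsucc_ne (hn : 5 ≤ n) {i : ℕ} (hi : i ∈ Icc 1 (n-1)) : wsucc n i ≠ i := by
  simp only [mem_Icc] at hi
  unfold wsucc; split_ifs with h <;> omega

end Infra

section Arith
-- generic real arithmetic facts
lemma g1 (A B H : ℝ) (hA0 : 0 ≤ A) (hA1 : A ≤ 1) (hB0 : 0 ≤ B) (hB1 : B ≤ 1)
    (hH0 : 0 ≤ H) (hH1 : H ≤ 1) :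
    max 0 (A+B+H-1 - max 0 (A+B-1) - max 0 (A+H-1) - max 0 (B+H-1))
      ≤ min B (1-H) - max 0 (B-H) := by
  simp only [max_def, min_def]; split_ifs <;> linarith

lemma g2 (A B H : ℝ) (hA0 : 0 ≤ A) (hA1 : A ≤ 1) (hB0 : 0 ≤ B) (hB1 : B ≤ 1)
    (hH0 : 0 ≤ H) (hH1 : H ≤ 1) :
    max 0 (A+B+H-1 - max 0 (A+B-1) - max 0 (A+H-1) - max 0 (B+H-1))
      ≤ min A (1-H) - max 0 (A-H) := by
  simp only [max_def, min_def]; split_ifs <;> linarith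

lemma g3 (A B H : ℝ) (hA0 : 0 ≤ A) (hA1 : A ≤ 1) (hB0 : 0 ≤ B) (hB1 : B ≤ 1)
    (hH0 : 0 ≤ H) (hH1 : H ≤ 1) :
    max 0 (A+B+H-1 - max 0 (A+B-1) - max 0 (A+H-1) - max 0 (B+H-1))
      ≤ H + max 0 (A+B-1) - max 0 (A+H-1) - max 0 (B+H-1) := by
  simp only [max_def, min_def]; split_ifs <;> linarith

lemma g4 (A B H : ℝ) (hA0 : 0 ≤ A) (hA1 : A ≤ 1) (hB0 : 0 ≤ B) (hB1 : B ≤ 1)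
    (hH0 : 0 ≤ H) (hH1 : H ≤ 1) (hs : ¬ (1 ≤ A+B+H) ∨ ¬ (A+B+H ≤ 2)) :
    A+B+H-1 - max 0 (A+B-1) - max 0 (A+H-1) - max 0 (B+H-1) ≤ 0 := by
  rcases hs with hs | hs <;>
  · simp only [max_def, min_def]; split_ifs <;> linarith

lemma g5 (A B H : ℝ) : min A (1-H) = A - max 0 (A + H - 1) := by
  simp only [max_def, min_def]; split_ifs <;> linarith

lemma g6 (A B : ℝ) : max 1 (A+B) = 1 + max 0 (A+B-1) := by
  simp only [max_def]; split_ifs <;> linarith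

lemma g7 (A B : ℝ) : min 1 (A+B) = A + B - max 0 (A+B-1) := by
  simp only [max_def, min_def]; split_ifs <;> linarith
end Arith

noncomputable def eqW (n : ℕ) (x : ℕ → ℝ) (i : ℕ) : ℝ := max 0 (x i + x (wsucc n i) - 1)
noncomputable def sqW (n : ℕ) (x : ℕ → ℝ) (i : ℕ) : ℝ := max 0 (x i + x n - 1)
noncomputable def wqW (n : ℕ) (x : ℕ → ℝ) (i : ℕ) : ℝ :=
  x i + x (wsucc n i) + x n - 1 - eqW n x i - sqW n x i - sqW n x (wsucc n i)
noncomputable def mxW (n : ℕ) (x : ℕ → ℝ) (i : ℕ) : ℝ := max 0 (x i + x (wsucc n i) + x n - 1)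

lemma phiW_eq (n : ℕ) (x : ℕ → ℝ) (S : Finset ℕ) :
    phiW n x S = ∑ i ∈ Icc 1 (n-1) \ S, eqW n x i
      + ∑ i ∈ Icc 1 (n-1) \ (S ∪ S.image (wsucc n)), sqW n x i
      + ∑ i ∈ S, mxW n x i := rfl

section Key
variable {n : ℕ} {x : ℕ → ℝ} {T : Finset ℕ}

theorem keyW (hn : 5 ≤ n)
    (hT : T ⊆ Finset.Icc 1 (n - 1))
    (hP1 : T ∩ T.image (wsucc n) = ∅)
    (hP2 : phiW n x T = phiStarW n x)
    (hP3 : ∀ i ∈ T, 1 ≤ x i + x (wsucc n i) + x n ∧ x i + x (wsucc n i) + x n ≤ 2)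
    (P G : Finset ℕ) (hPT : P ⊆ T) (hGIcc : G ⊆ Icc 1 (n-1))
    (hGT : ∀ g ∈ G, g ∉ T)
    (hGadj : ∀ g ∈ G, wsucc n g ∉ G)
    (hGpred : ∀ g ∈ G, wpred n g ∈ T → wpred n g ∈ P)
    (hGsucc : ∀ g ∈ G, wsucc n g ∈ T → wsucc n g ∈ P) :
    ∑ g ∈ G, wqW n x g ≤ ∑ j ∈ P, wqW n x j := by
  have hI1 : ∀ j ∈ T, wsucc n j ∉ T := by
    intro j hj hsj
    have : wsucc n j ∈ T ∩ T.image (wsucc n) :=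
      mem_inter.mpr ⟨hsj, mem_image_of_mem _ hj⟩
    simp [hP1] at this
  set II := Icc 1 (n-1) with hII
  set T' := (T \ P) ∪ G with hT'def
  have hT'sub : T' ⊆ II := by
    intro i hi
    rcases mem_union.mp hi with h | h
    · exact hT (mem_sdiff.mp h).1
    · exact hGIcc h
  have hT'indep : T' ∩ T'.image (wsucc n) = ∅ := by
    rw [eq_empty_iff_forall_notMem]
    intro i hi
    obtain ⟨hiT', himg⟩ := mem_inter.mp hi
    obtain ⟨j, hj, hji⟩ := mem_image.mp himg
    rcases mem_union.mp hj with hj' | hj'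
    · obtain ⟨hjT, hjP⟩ := mem_sdiff.mp hj'
      rcases mem_union.mp hiT' with hi' | hi'
      · exact hI1 j hjT (hji ▸ (mem_sdiff.mp hi').1)
      · have hpred : wpred n i ∈ T := by
          rw [← hji, wpred_wsucc hn (hT hjT)]; exact hjT
        have := hGpred i hi' hpred
        rw [← hji, wpred_wsucc hn (hT hjT)] at this
        exact hjP this
    · rcases mem_union.mp hiT' with hi' | hi'
      · obtain ⟨hiT, hiP⟩ := mem_sdiff.mp hi'
        have := hGsucc j hj' (hji ▸ hiT)
        rw [hji] at this
        exact hiP this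
      · exact hGadj j hj' (hji ▸ hi')
  have hmem : T' ∈ ((Finset.Icc 1 (n - 1)).powerset.filter
      (fun S => S ∩ S.image (wsucc n) = ∅)) := by
    simp only [Finset.mem_filter, Finset.mem_powerset]
    exact ⟨hT'sub, hT'indep⟩
  have hφ : phiW n x T' ≤ phiW n x T := by
    rw [hP2]
    exact Finset.le_sup' (phiW n x) hmem
  -- disjointness facts
  have hGP : ∀ g ∈ G, g ∉ P := fun g hg hgP => hGT g hg (hPT hgP)
  have hdisjTP_G : Disjoint (T \ P) G :=
    disjoint_right.mpr (fun g hg => by simp [hGT g hg])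
  have hdisjIT_P : Disjoint (II \ T) P :=
    disjoint_left.mpr (fun i hi hiP => (mem_sdiff.mp hi).2 (hPT hiP))
  -- edge sums
  have hsetE : II \ T' = ((II \ T) ∪ P) \ G := by
    ext i
    have h1 : i ∈ P → i ∈ T := fun h => hPT h
    have h2 : i ∈ T → i ∈ II := fun h => hT h
    have h3 : i ∈ G → i ∉ T := hGT i
    simp only [hT'def, mem_sdiff, mem_union]
    tauto
  have hGsubE : G ⊆ (II \ T) ∪ P := by
    intro g hg
    exact mem_union.mpr (Or.inl (mem_sdiff.mpr ⟨hGIcc hg, hGT g hg⟩))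
  have hE : ∑ i ∈ II \ T', eqW n x i
      = ∑ i ∈ II \ T, eqW n x i + ∑ i ∈ P, eqW n x i - ∑ i ∈ G, eqW n x i := by
    rw [hsetE, sum_sdiff_eq_sub hGsubE, sum_union hdisjIT_P]
  -- triangle sums
  have hTriSplit : ∑ i ∈ T', mxW n x i
      = ∑ i ∈ T, mxW n x i - ∑ j ∈ P, mxW n x j + ∑ g ∈ G, mxW n x g := by
    rw [hT'def, sum_union hdisjTP_G, sum_sdiff_eq_sub hPT]
  have hTriP : ∑ j ∈ P, mxW n x j
      = ∑ j ∈ P, (wqW n x j + eqW n x j + sqW n x j + sqW n x (wsucc n j)) := by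
    refine sum_congr rfl (fun j hj => ?_)
    have h1 : 1 ≤ x j + x (wsucc n j) + x n := (hP3 j (hPT hj)).1
    unfold mxW wqW
    rw [max_eq_right (by linarith)]
    ring
  have hTriG : ∑ g ∈ G, (wqW n x g + eqW n x g + sqW n x g + sqW n x (wsucc n g))
      ≤ ∑ g ∈ G, mxW n x g := by
    refine sum_le_sum (fun g hg => ?_)
    unfold mxW wqW
    have := le_max_right (0:ℝ) (x g + x (wsucc n g) + x n - 1)
    linarith
  -- spoke sums
  set cvT := T ∪ T.image (wsucc n) with hcvT
  set cvP := P ∪ P.image (wsucc n) with hcvP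
  set cvG := G ∪ G.image (wsucc n) with hcvG
  set cvT' := T' ∪ T'.image (wsucc n) with hcvT'
  have hcvPsubT : cvP ⊆ cvT := by
    intro i hi
    rcases mem_union.mp hi with h | h
    · exact mem_union.mpr (Or.inl (hPT h))
    · obtain ⟨j, hj, hji⟩ := mem_image.mp h
      exact mem_union.mpr (Or.inr (mem_image.mpr ⟨j, hPT hj, hji⟩))
  have hcovsub : ((II \ cvT) ∪ cvP) \ cvG ⊆ II \ cvT' := by
    intro i hi
    obtain ⟨hi1, hi2⟩ := mem_sdiff.mp hi
    have hiI : i ∈ II := by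
      rcases mem_union.mp hi1 with h | h
      · exact (mem_sdiff.mp h).1
      · rcases mem_union.mp h with h' | h'
        · exact hT (hPT h')
        · obtain ⟨j, hj, hji⟩ := mem_image.mp h'
          exact hji ▸ wsucc_mem hn (hT (hPT hj))
    refine mem_sdiff.mpr ⟨hiI, fun hc => ?_⟩
    rcases mem_union.mp hc with hc' | hc'
    · -- i ∈ T' = (T\P) ∪ G
      rcases mem_union.mp hc' with hc'' | hc''
      · -- i ∈ T \ P
        obtain ⟨hiT, hiP⟩ := mem_sdiff.mp hc''
        rcases mem_union.mp hi1 with h | h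
        · exact (mem_sdiff.mp h).2 (mem_union.mpr (Or.inl hiT))
        · rcases mem_union.mp h with h' | h'
          · exact hiP h'
          · obtain ⟨j, hj, hji⟩ := mem_image.mp h'
            exact hI1 j (hPT hj) (hji ▸ hiT)
      · -- i ∈ G
        exact hi2 (mem_union.mpr (Or.inl hc''))
    · -- i ∈ image wsucc T'
      obtain ⟨j, hj, hji⟩ := mem_image.mp hc'
      rcases mem_union.mp hj with hj' | hj'
      · -- j ∈ T \ P : then i = wsucc j ∈ cvT; need i ∉ (II\cvT)∪cvP minus...
        obtain ⟨hjT, hjP⟩ := mem_sdiff.mp hj'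
        rcases mem_union.mp hi1 with h | h
        · exact (mem_sdiff.mp h).2 (mem_union.mpr (Or.inr (mem_image.mpr ⟨j, hjT, hji⟩)))
        · rcases mem_union.mp h with h' | h'
          · -- i ∈ P so i ∈ T with predecessor j ∈ T: contradiction
            exact hI1 j hjT (hji ▸ (hPT h'))
          · obtain ⟨j', hj', hj'i⟩ := mem_image.mp h'
            have : j = j' := wsucc_injOn hn (hT hjT) (hT (hPT hj')) (by rw [hji, hj'i])
            exact hjP (this ▸ hj')
      · -- j ∈ G: i = wsucc j ∈ cvG
        exact hi2 (mem_union.mpr (Or.inr (mem_image.mpr ⟨j, hj', hji⟩)))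
  have hsq0 : ∀ i, 0 ≤ sqW n x i := fun i => le_max_left _ _
  have hS1 : ∑ i ∈ ((II \ cvT) ∪ cvP) \ cvG, sqW n x i ≤ ∑ i ∈ II \ cvT', sqW n x i :=
    sum_le_sum_of_subset_of_nonneg hcovsub (fun i _ _ => hsq0 i)
  have hS2 : ∑ i ∈ (II \ cvT) ∪ cvP, sqW n x i - ∑ i ∈ cvG, sqW n x i
      ≤ ∑ i ∈ ((II \ cvT) ∪ cvP) \ cvG, sqW n x i := by
    have h1 := Finset.sum_inter_add_sum_sdiff ((II \ cvT) ∪ cvP) cvG (sqW n x)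
    have h2 : ∑ i ∈ ((II \ cvT) ∪ cvP) ∩ cvG, sqW n x i ≤ ∑ i ∈ cvG, sqW n x i :=
      sum_le_sum_of_subset_of_nonneg (inter_subset_right) (fun i _ _ => hsq0 i)
    linarith
  have hdisjS : Disjoint (II \ cvT) cvP :=
    disjoint_left.mpr (fun i hi hiP => (mem_sdiff.mp hi).2 (hcvPsubT hiP))
  have hS3 : ∑ i ∈ (II \ cvT) ∪ cvP, sqW n x i
      = ∑ i ∈ II \ cvT, sqW n x i + ∑ i ∈ cvP, sqW n x i := sum_union hdisjS
  have hSP : ∑ i ∈ cvP, sqW n x i = ∑ j ∈ P, (sqW n x j + sqW n x (wsucc n j)) := by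
    rw [hcvP, sum_union (disjoint_left.mpr (fun i hi hi' => by
      obtain ⟨j, hj, hji⟩ := mem_image.mp hi'
      exact hI1 j (hPT hj) (hji ▸ (hPT hi)))),
      sum_image (fun i hi j hj hij => wsucc_injOn hn (hT (hPT hi)) (hT (hPT hj)) hij),
      ← sum_add_distrib]
  have hSG : ∑ i ∈ cvG, sqW n x i = ∑ g ∈ G, (sqW n x g + sqW n x (wsucc n g)) := by
    rw [hcvG, sum_union (disjoint_left.mpr (fun i hi hi' => by
      obtain ⟨j, hj, hji⟩ := mem_image.mp hi'
      exact hGadj j hj (hji ▸ hi))),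
      sum_image (fun i hi j hj hij => wsucc_injOn hn (hGIcc hi) (hGIcc hj) hij),
      ← sum_add_distrib]
  -- assemble
  rw [phiW_eq, phiW_eq] at hφ
  rw [← hcvT, ← hcvT'] at hφ
  have hsplitP : ∑ j ∈ P, (wqW n x j + eqW n x j + sqW n x j + sqW n x (wsucc n j))
      = ∑ j ∈ P, wqW n x j + ∑ j ∈ P, eqW n x j
        + ∑ j ∈ P, (sqW n x j + sqW n x (wsucc n j)) := by
    rw [← sum_add_distrib, ← sum_add_distrib]
    refine sum_congr rfl (fun j _ => by ring)
  have hsplitG : ∑ g ∈ G, (wqW n x g + eqW n x g + sqW n x g + sqW n x (wsucc n g))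
      = ∑ g ∈ G, wqW n x g + ∑ g ∈ G, eqW n x g
        + ∑ g ∈ G, (sqW n x g + sqW n x (wsucc n g)) := by
    rw [← sum_add_distrib, ← sum_add_distrib]
    refine sum_congr rfl (fun j _ => by ring)
  linarith
end Key


noncomputable def dW (n : ℕ) (x : ℕ → ℝ) (i : ℕ) : ℝ := max 0 (wqW n x i)

noncomputable def rhoW (n : ℕ) (x : ℕ → ℝ) (T : Finset ℕ) (i : ℕ) : ℝ :=
  if i ∈ T then wqW n x i else 0

def gpW (n j s : ℕ) : ℕ := posW n ((j : ZMod (n-1)) - ((2*s : ℕ) : ZMod (n-1)) + 1)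
def prW (n j s : ℕ) : ℕ := posW n ((j : ZMod (n-1)) - ((2*s : ℕ) : ZMod (n-1)))

noncomputable def CW (n : ℕ) (x : ℕ → ℝ) (T : Finset ℕ) (j m : ℕ) : ℝ :=
  (∑ s ∈ range m, dW n x (gpW n j (s+1)))
  - (∑ s ∈ range (m-1), wqW n x (prW n j (s+1)))
  - rhoW n x T (prW n j m)

def VW (n : ℕ) (T : Finset ℕ) (j m : ℕ) : Prop := ∀ s ∈ Icc 1 (m-1), prW n j s ∈ T

instance VW.dec (n : ℕ) (T : Finset ℕ) (j m : ℕ) : Decidable (VW n T j m) :=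
  inferInstanceAs (Decidable (∀ s ∈ Icc 1 (m-1), prW n j s ∈ T))

noncomputable def alphaW (n : ℕ) (x : ℕ → ℝ) (T : Finset ℕ) (j : ℕ) : ℝ :=
  max 0 ((insert 1 ((Icc 1 ((n-1)/2)).filter (fun m => VW n T j m))).sup'
    (insert_nonempty _ _) (CW n x T j))

noncomputable def betaW (n : ℕ) (x : ℕ → ℝ) (T : Finset ℕ) (j : ℕ) : ℝ :=
  max 0 (dW n x (wsucc n j) -
    (if wsucc n (wsucc n j) ∈ T then alphaW n x T (wsucc n (wsucc n j)) else 0))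

noncomputable def deltaW (n : ℕ) (x : ℕ → ℝ) (T : Finset ℕ) (i : ℕ) : ℝ :=
  if i ∈ T then alphaW n x T i
  else if wpred n i ∈ T then betaW n x T (wpred n i) else 0

section Chain
variable {n : ℕ} {x : ℕ → ℝ} {T : Finset ℕ}

lemma indep_succ (hP1 : T ∩ T.image (wsucc n) = ∅) : ∀ j ∈ T, wsucc n j ∉ T := by
  intro j hj hsj
  have : wsucc n j ∈ T ∩ T.image (wsucc n) :=
    mem_inter.mpr ⟨hsj, mem_image_of_mem _ hj⟩
  simp [hP1] at this

lemma wq_nonnegT (hn : 5 ≤ n) (hT : T ⊆ Finset.Icc 1 (n - 1))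
    (hP1 : T ∩ T.image (wsucc n) = ∅) (hP2 : phiW n x T = phiStarW n x)
    (hP3 : ∀ i ∈ T, 1 ≤ x i + x (wsucc n i) + x n ∧ x i + x (wsucc n i) + x n ≤ 2) :
    ∀ j ∈ T, 0 ≤ wqW n x j := by
  intro j hj
  have h := keyW hn hT hP1 hP2 hP3 {j} ∅ (by simpa using hj) (by simp) (by simp)
    (by simp) (by simp) (by simp)
  simpa using h

lemma gp_mem (hn : 5 ≤ n) (j s : ℕ) : gpW n j s ∈ Icc 1 (n-1) := posW_mem hn _
lemma pr_mem (hn : 5 ≤ n) (j s : ℕ) : prW n j s ∈ Icc 1 (n-1) := posW_mem hn _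

lemma pr_zero (hn : 5 ≤ n) {j : ℕ} (hj : j ∈ Icc 1 (n-1)) : prW n j 0 = j := by
  unfold prW
  norm_num
  exact posW_cast hn hj

lemma pr_K (hn : 5 ≤ n) {K j : ℕ} (hNK : n - 1 = 2*K) (hj : j ∈ Icc 1 (n-1)) :
    prW n j K = j := by
  unfold prW
  have hc : ((2*K : ℕ) : ZMod (n-1)) = 0 := by rw [← hNK]; exact ZMod.natCast_self _
  rw [hc, sub_zero]
  exact posW_cast hn hj

lemma wsucc_gp (hn : 5 ≤ n) (j s : ℕ) : wsucc n (gpW n j (s+1)) = prW n j s := by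
  unfold gpW prW
  rw [wsucc_posW hn]
  congr 1
  push_cast
  ring

lemma wpred_gp (hn : 5 ≤ n) (j s : ℕ) : wpred n (gpW n j (s+1)) = prW n j (s+1) := by
  unfold gpW prW
  rw [wpred_posW hn]
  congr 1
  push_cast
  ring

lemma gp_one (hn : 5 ≤ n) {j : ℕ} (hj : j ∈ Icc 1 (n-1)) : gpW n j 1 = wpred n j := by
  unfold gpW
  rw [wpred_eq hn hj]
  congr 1
  push_cast
  ring

lemma pr_one (hn : 5 ≤ n) {j : ℕ} (hj : j ∈ Icc 1 (n-1)) :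
    prW n j 1 = wpred n (wpred n j) := by
  rw [wpred_eq hn hj, wpred_posW hn]
  unfold prW
  congr 1
  push_cast
  ring

lemma wsucc2_eq (hn : 5 ≤ n) {j : ℕ} (hj : j ∈ Icc 1 (n-1)) :
    wsucc n (wsucc n j) = posW n ((j : ZMod (n-1)) + 2) := by
  rw [wsucc_eq hn hj, wsucc_posW hn]
  congr 1
  ring

lemma pr_Km1 (hn : 5 ≤ n) {K j : ℕ} (hNK : n - 1 = 2*K) (hK2 : 2 ≤ K) {j' : ℕ}
    (hj : j ∈ Icc 1 (n-1)) (hj' : j' = wsucc n (wsucc n j)) :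
    prW n j (K-1) = j' := by
  have hc : ((2*(K-1) : ℕ) : ZMod (n-1)) = -2 := by
    have h : ((2*(K-1) + 2 : ℕ) : ZMod (n-1)) = 0 := by
      have : 2*(K-1) + 2 = n - 1 := by omega
      rw [this]; exact ZMod.natCast_self _
    push_cast at h ⊢
    linear_combination h
  unfold prW
  rw [hc, hj', wsucc2_eq hn hj]
  congr 1
  ring

lemma gp_inj (hn : 5 ≤ n) {K j s s' : ℕ} (hNK : n - 1 = 2*K) (hs : s < K) (hs' : s' < K)
    (h : gpW n j (s+1) = gpW n j (s'+1)) : s = s' := by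
  have h0 := posW_inj hn h
  have h1 : ((2*(s+1) : ℕ) : ZMod (n-1)) = ((2*(s'+1) : ℕ) : ZMod (n-1)) := by
    push_cast at h0 ⊢
    linear_combination -h0
  have h5 : 5 ≤ n := hn
  rcases castEq2 hn (by omega) (by omega) h1 with h' | h' | h' | h' | h' <;> omega

lemma pr_ne_gp (hn : 5 ≤ n) {K j s t : ℕ} (hNK : n - 1 = 2*K) (hs : s ≤ K) (ht1 : 1 ≤ t)
    (ht : t ≤ K) (h : prW n j s = gpW n j t) : False := by
  have h0 := posW_inj hn h
  have h1 : ((2*t : ℕ) : ZMod (n-1)) = ((2*s + 1 : ℕ) : ZMod (n-1)) := by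
    push_cast at h0 ⊢
    linear_combination h0
  have h5 : 5 ≤ n := hn
  rcases castEq2 hn (by omega) (by omega) h1 with h' | h' | h' | h' | h' <;> omega

lemma gp_shift (hn : 5 ≤ n) {j1 j2 : ℕ} (h2 : (j2 : ZMod (n-1)) = (j1 : ZMod (n-1)) + 2)
    (s : ℕ) : gpW n j2 (s+1) = gpW n j1 s := by
  unfold gpW
  rw [h2]
  congr 1
  push_cast
  ring

lemma pr_shift (hn : 5 ≤ n) {j1 j2 : ℕ} (h2 : (j2 : ZMod (n-1)) = (j1 : ZMod (n-1)) + 2)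
    (s : ℕ) : prW n j2 (s+1) = prW n j1 s := by
  unfold prW
  rw [h2]
  congr 1
  push_cast
  ring

lemma rho_nonneg (hn : 5 ≤ n) (hT : T ⊆ Finset.Icc 1 (n - 1))
    (hP1 : T ∩ T.image (wsucc n) = ∅) (hP2 : phiW n x T = phiStarW n x)
    (hP3 : ∀ i ∈ T, 1 ≤ x i + x (wsucc n i) + x n ∧ x i + x (wsucc n i) + x n ≤ 2)
    (i : ℕ) : 0 ≤ rhoW n x T i := by
  unfold rhoW
  split_ifs with h
  · exact wq_nonnegT hn hT hP1 hP2 hP3 i h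
  · exact le_refl 0

lemma dW_nonneg (n : ℕ) (x : ℕ → ℝ) (i : ℕ) : 0 ≤ dW n x i := le_max_left _ _
lemma wq_le_dW (n : ℕ) (x : ℕ → ℝ) (i : ℕ) : wqW n x i ≤ dW n x i := le_max_right _ _

end Chain


section Chain2
variable {n : ℕ} {x : ℕ → ℝ} {T : Finset ℕ}

lemma pr_inj (hn : 5 ≤ n) {K j s s' : ℕ} (hNK : n - 1 = 2*K) (hs : s < K) (hs' : s' < K)
    (h : prW n j s = prW n j s') : s = s' := by
  have h0 := posW_inj hn h
  have h1 : ((2*s : ℕ) : ZMod (n-1)) = ((2*s' : ℕ) : ZMod (n-1)) := by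
    push_cast at h0 ⊢
    linear_combination -h0
  have h5 : 5 ≤ n := hn
  rcases castEq2 hn (by omega) (by omega) h1 with h' | h' | h' | h' | h' <;> omega

lemma D1 (hn : 5 ≤ n) {K : ℕ} (hNK : n - 1 = 2*K)
    (hT : T ⊆ Finset.Icc 1 (n - 1))
    (hP1 : T ∩ T.image (wsucc n) = ∅) (hP2 : phiW n x T = phiStarW n x)
    (hP3 : ∀ i ∈ T, 1 ≤ x i + x (wsucc n i) + x n ∧ x i + x (wsucc n i) + x n ≤ 2)
    {j m : ℕ} (hj : j ∈ T) (hm1 : 1 ≤ m) (hmK : m ≤ K) (hV : VW n T j m) :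
    CW n x T j m ≤ wqW n x j := by
  have hjI : j ∈ Icc 1 (n-1) := hT hj
  set Gm := (range m).image (fun s => gpW n j (s+1)) with hGm
  set Gpos := Gm.filter (fun g => 0 < wqW n x g) with hGpos
  set Pm := (range m).image (fun s => prW n j s) with hPm
  have hVT : ∀ s, s < m → prW n j s ∈ T := by
    intro s hs
    rcases Nat.eq_zero_or_pos s with rfl | hpos
    · rw [pr_zero hn hjI]; exact hj
    · exact hV s (mem_Icc.mpr ⟨hpos, by omega⟩)
  set Pend := (if prW n j m ∈ T then ({prW n j m} : Finset ℕ) else ∅) with hPend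
  set P := Pm ∪ Pend with hP
  have hPmT : Pm ⊆ T := by
    intro p hp
    obtain ⟨s, hs, rfl⟩ := mem_image.mp hp
    exact hVT s (mem_range.mp hs)
  have hPT2 : P ⊆ T := by
    intro p hp
    rcases mem_union.mp hp with h | h
    · exact hPmT h
    · rw [hPend] at h
      split_ifs at h with hc
      · rw [mem_singleton.mp h]; exact hc
      · simp at h
  have hGmem : ∀ g ∈ Gpos, ∃ s, s < m ∧ g = gpW n j (s+1) := by
    intro g hg
    obtain ⟨s, hs, rfl⟩ := mem_image.mp (mem_filter.mp hg).1
    exact ⟨s, mem_range.mp hs, rfl⟩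
  have hkey : ∑ g ∈ Gpos, wqW n x g ≤ ∑ p ∈ P, wqW n x p := by
    apply keyW hn hT hP1 hP2 hP3
    · exact hPT2
    · intro g hg
      obtain ⟨s, _, rfl⟩ := hGmem g hg
      exact gp_mem hn j (s+1)
    · intro g hg
      obtain ⟨s, hs, rfl⟩ := hGmem g hg
      intro hgT
      exact indep_succ hP1 _ hgT (by rw [wsucc_gp hn]; exact hVT s hs)
    · intro g hg
      obtain ⟨s, hs, rfl⟩ := hGmem g hg
      intro hc
      obtain ⟨s', hs', hceq⟩ := hGmem _ hc
      rw [wsucc_gp hn] at hceq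
      exact pr_ne_gp hn hNK (by omega) (by omega) (by omega) hceq
    · intro g hg
      obtain ⟨s, hs, rfl⟩ := hGmem g hg
      rw [wpred_gp hn]
      intro hpT
      rcases Nat.lt_or_ge (s+1) m with hlt | hge
      · exact mem_union.mpr (Or.inl (mem_image.mpr ⟨s+1, mem_range.mpr hlt, rfl⟩))
      · have hsm : s + 1 = m := by omega
        rw [hsm] at hpT ⊢
        refine mem_union.mpr (Or.inr ?_)
        rw [hPend, if_pos hpT]
        exact mem_singleton_self _
    · intro g hg
      obtain ⟨s, hs, rfl⟩ := hGmem g hg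
      rw [wsucc_gp hn]
      intro _
      exact mem_union.mpr (Or.inl (mem_image.mpr ⟨s, mem_range.mpr hs, rfl⟩))
  have hinjG : ∀ s₁ ∈ range m, ∀ s₂ ∈ range m, gpW n j (s₁+1) = gpW n j (s₂+1) → s₁ = s₂ := by
    intro s₁ hs₁ s₂ hs₂ h
    simp only [mem_range] at hs₁ hs₂
    exact gp_inj hn hNK (by omega) (by omega) h
  have hinjP : ∀ s₁ ∈ range m, ∀ s₂ ∈ range m, prW n j s₁ = prW n j s₂ → s₁ = s₂ := by
    intro s₁ hs₁ s₂ hs₂ h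
    simp only [mem_range] at hs₁ hs₂
    exact pr_inj hn hNK (by omega) (by omega) h
  have hsum1 : ∑ g ∈ Gm, dW n x g = ∑ s ∈ range m, dW n x (gpW n j (s+1)) :=
    sum_image hinjG
  have hsum2 : ∑ g ∈ Gpos, wqW n x g = ∑ g ∈ Gm, dW n x g := by
    rw [hGpos, sum_filter]
    refine sum_congr rfl (fun g _ => ?_)
    unfold dW
    split_ifs with h
    · exact (max_eq_right (le_of_lt h)).symm
    · push_neg at h
      exact (max_eq_left h).symm
  have hsum3 : ∑ p ∈ P, wqW n x p
      ≤ (∑ s ∈ range m, wqW n x (prW n j s)) + rhoW n x T (prW n j m) := by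
    have hPmsum : ∑ p ∈ Pm, wqW n x p = ∑ s ∈ range m, wqW n x (prW n j s) :=
      sum_image hinjP
    rw [hP, hPend]
    unfold rhoW
    split_ifs with hmemT
    · by_cases hin : prW n j m ∈ Pm
      · rw [union_eq_left.mpr (by simpa using hin)]
        have h0 := wq_nonnegT hn hT hP1 hP2 hP3 _ hmemT
        rw [hPmsum]
        linarith
      · rw [sum_union (by simp [disjoint_singleton_right, hin]), sum_singleton, hPmsum]
    · rw [union_empty, hPmsum]
      simp
  have hsum4 : ∑ s ∈ range m, wqW n x (prW n j s)
      = wqW n x j + ∑ s ∈ range (m-1), wqW n x (prW n j (s+1)) := by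
    obtain ⟨m', rfl⟩ : ∃ m', m = m'+1 := ⟨m-1, by omega⟩
    rw [Finset.sum_range_succ']
    rw [pr_zero hn hjI]
    simp [add_comm]
  unfold CW
  linarith
end Chain2


section Chain3
variable {n : ℕ} {x : ℕ → ℝ} {T : Finset ℕ}

lemma wsucc_ne_gp (hn : 5 ≤ n) {K j t : ℕ} (hNK : n - 1 = 2*K) (hjI : j ∈ Icc 1 (n-1))
    (ht1 : 1 ≤ t) (ht : t < K) : wsucc n j ≠ gpW n j t := by
  intro h
  rw [wsucc_eq hn hjI] at h
  have h0 := posW_inj hn h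
  have h1 : ((2*t : ℕ) : ZMod (n-1)) = ((0 : ℕ) : ZMod (n-1)) := by
    push_cast at h0 ⊢
    linear_combination h0
  have h5 : 5 ≤ n := hn
  rcases castEq2 hn (by omega) (by omega) h1 with h' | h' | h' | h' | h' <;> omega

lemma wsucc2_ne_gp (hn : 5 ≤ n) {K j t : ℕ} (hNK : n - 1 = 2*K) (hjI : j ∈ Icc 1 (n-1))
    (ht1 : 1 ≤ t) (ht : t < K) : wsucc n (wsucc n j) ≠ gpW n j t := by
  intro h
  rw [wsucc2_eq hn hjI] at h
  have h0 := posW_inj hn h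
  have h1 : ((2*t + 1 : ℕ) : ZMod (n-1)) = ((0 : ℕ) : ZMod (n-1)) := by
    push_cast at h0 ⊢
    linear_combination h0
  have h5 : 5 ≤ n := hn
  rcases castEq2 hn (by omega) (by omega) h1 with h' | h' | h' | h' | h' <;> omega

lemma pr_ne_wsucc (hn : 5 ≤ n) {K j s : ℕ} (hNK : n - 1 = 2*K) (hjI : j ∈ Icc 1 (n-1))
    (hs : s < K) : prW n j s ≠ wsucc n j := by
  intro h
  rw [wsucc_eq hn hjI] at h
  have h0 := posW_inj hn h
  have h1 : ((2*s + 1 : ℕ) : ZMod (n-1)) = ((0 : ℕ) : ZMod (n-1)) := by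
    push_cast at h0 ⊢
    linear_combination -h0
  have h5 : 5 ≤ n := hn
  rcases castEq2 hn (by omega) (by omega) h1 with h' | h' | h' | h' | h' <;> omega

lemma CW_one (hn : 5 ≤ n) {j : ℕ} (hjI : j ∈ Icc 1 (n-1)) :
    CW n x T j 1 = dW n x (wpred n j) - rhoW n x T (prW n j 1) := by
  unfold CW
  rw [show (1:ℕ) - 1 = 0 from rfl]
  rw [Finset.sum_range_zero, Finset.sum_range_one]
  rw [show (0:ℕ) + 1 = 1 from rfl, gp_one hn hjI]
  ring

lemma CW_shift (hn : 5 ≤ n) {j1 j2 m : ℕ}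
    (h2 : (j2 : ZMod (n-1)) = (j1 : ZMod (n-1)) + 2) (hm : 1 ≤ m) :
    CW n x T j2 (m+1)
      = dW n x (gpW n j2 1) - wqW n x (prW n j2 1) + CW n x T j1 m := by
  unfold CW
  have e1 : ∑ s ∈ range (m+1), dW n x (gpW n j2 (s+1))
      = dW n x (gpW n j2 1) + ∑ s ∈ range m, dW n x (gpW n j1 (s+1)) := by
    rw [Finset.sum_range_succ', add_comm]
    congr 1
    refine sum_congr rfl (fun s _ => ?_)
    rw [gp_shift hn h2 (s+1)]
  have e2 : ∑ s ∈ range (m+1-1), wqW n x (prW n j2 (s+1))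
      = wqW n x (prW n j2 1) + ∑ s ∈ range (m-1), wqW n x (prW n j1 (s+1)) := by
    simp only [Nat.add_sub_cancel]
    obtain ⟨m', rfl⟩ : ∃ m', m = m'+1 := ⟨m-1, by omega⟩
    rw [Finset.sum_range_succ', add_comm]
    simp only [Nat.add_sub_cancel]
    congr 1
    refine sum_congr rfl (fun s _ => ?_)
    rw [pr_shift hn h2 (s+1)]
  have e3 : prW n j2 (m+1) = prW n j1 m := pr_shift hn h2 m
  rw [e1, e2, e3]
  ring

lemma D1K (hn : 5 ≤ n) {K : ℕ} (hNK : n - 1 = 2*K)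
    (hT : T ⊆ Finset.Icc 1 (n - 1))
    (hP1 : T ∩ T.image (wsucc n) = ∅) (hP2 : phiW n x T = phiStarW n x)
    (hP3 : ∀ i ∈ T, 1 ≤ x i + x (wsucc n i) + x n ∧ x i + x (wsucc n i) + x n ≤ 2)
    {j : ℕ} (hj : j ∈ T) (hK2 : 2 ≤ K) (hV : VW n T j K) :
    CW n x T j K ≤ 0 := by
  have hjI : j ∈ Icc 1 (n-1) := hT hj
  set Gm := (range K).image (fun s => gpW n j (s+1)) with hGm
  set Gpos := Gm.filter (fun g => 0 < wqW n x g) with hGpos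
  set Pm := (range K).image (fun s => prW n j s) with hPm
  have hVT : ∀ s, s < K → prW n j s ∈ T := by
    intro s hs
    rcases Nat.eq_zero_or_pos s with rfl | hpos
    · rw [pr_zero hn hjI]; exact hj
    · exact hV s (mem_Icc.mpr ⟨hpos, by omega⟩)
  have hPmT : Pm ⊆ T := by
    intro p hp
    obtain ⟨s, hs, rfl⟩ := mem_image.mp hp
    exact hVT s (mem_range.mp hs)
  have hGmem : ∀ g ∈ Gpos, ∃ s, s < K ∧ g = gpW n j (s+1) := by
    intro g hg
    obtain ⟨s, hs, rfl⟩ := mem_image.mp (mem_filter.mp hg).1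
    exact ⟨s, mem_range.mp hs, rfl⟩
  have hkey : ∑ g ∈ Gpos, wqW n x g ≤ ∑ p ∈ Pm, wqW n x p := by
    apply keyW hn hT hP1 hP2 hP3
    · exact hPmT
    · intro g hg
      obtain ⟨s, _, rfl⟩ := hGmem g hg
      exact gp_mem hn j (s+1)
    · intro g hg
      obtain ⟨s, hs, rfl⟩ := hGmem g hg
      intro hgT
      exact indep_succ hP1 _ hgT (by rw [wsucc_gp hn]; exact hVT s hs)
    · intro g hg
      obtain ⟨s, hs, rfl⟩ := hGmem g hg
      intro hc
      obtain ⟨s', hs', hceq⟩ := hGmem _ hc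
      rw [wsucc_gp hn] at hceq
      exact pr_ne_gp hn hNK (by omega) (by omega) (by omega) hceq
    · intro g hg
      obtain ⟨s, hs, rfl⟩ := hGmem g hg
      rw [wpred_gp hn]
      intro hpT
      rcases Nat.lt_or_ge (s+1) K with hlt | hge
      · exact mem_image.mpr ⟨s+1, mem_range.mpr hlt, rfl⟩
      · have hsm : s + 1 = K := by omega
        rw [hsm, pr_K hn hNK hjI]
        rw [← pr_zero hn hjI]
        exact mem_image.mpr ⟨0, mem_range.mpr (by omega), rfl⟩
    · intro g hg
      obtain ⟨s, hs, rfl⟩ := hGmem g hg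
      rw [wsucc_gp hn]
      intro _
      exact mem_image.mpr ⟨s, mem_range.mpr hs, rfl⟩
  have hinjG : ∀ s₁ ∈ range K, ∀ s₂ ∈ range K, gpW n j (s₁+1) = gpW n j (s₂+1) → s₁ = s₂ := by
    intro s₁ hs₁ s₂ hs₂ h
    simp only [mem_range] at hs₁ hs₂
    exact gp_inj hn hNK (by omega) (by omega) h
  have hinjP : ∀ s₁ ∈ range K, ∀ s₂ ∈ range K, prW n j s₁ = prW n j s₂ → s₁ = s₂ := by
    intro s₁ hs₁ s₂ hs₂ h
    simp only [mem_range] at hs₁ hs₂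
    exact pr_inj hn hNK (by omega) (by omega) h
  have hsum1 : ∑ g ∈ Gm, dW n x g = ∑ s ∈ range K, dW n x (gpW n j (s+1)) :=
    sum_image hinjG
  have hsum2 : ∑ g ∈ Gpos, wqW n x g = ∑ g ∈ Gm, dW n x g := by
    rw [hGpos, sum_filter]
    refine sum_congr rfl (fun g _ => ?_)
    unfold dW
    split_ifs with h
    · exact (max_eq_right (le_of_lt h)).symm
    · push_neg at h
      exact (max_eq_left h).symm
  have hsum3 : ∑ p ∈ Pm, wqW n x p = ∑ s ∈ range K, wqW n x (prW n j s) :=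
    sum_image hinjP
  have hsum4 : ∑ s ∈ range K, wqW n x (prW n j s)
      = wqW n x j + ∑ s ∈ range (K-1), wqW n x (prW n j (s+1)) := by
    obtain ⟨m', rfl⟩ : ∃ m', K = m'+1 := ⟨K-1, by omega⟩
    rw [Finset.sum_range_succ']
    rw [pr_zero hn hjI]
    simp [add_comm]
  have hrho : rhoW n x T (prW n j K) = wqW n x j := by
    rw [pr_K hn hNK hjI]
    unfold rhoW
    rw [if_pos hj]
  unfold CW
  rw [hrho]
  linarith
end Chain3


section Chain4
variable {n : ℕ} {x : ℕ → ℝ} {T : Finset ℕ}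

lemma D5core (hn : 5 ≤ n) {K : ℕ} (hNK : n - 1 = 2*K) (hK2 : 2 ≤ K)
    (hT : T ⊆ Finset.Icc 1 (n - 1))
    (hP1 : T ∩ T.image (wsucc n) = ∅) (hP2 : phiW n x T = phiStarW n x)
    (hP3 : ∀ i ∈ T, 1 ≤ x i + x (wsucc n i) + x n ∧ x i + x (wsucc n i) + x n ≤ 2)
    {j m : ℕ} (hj : j ∈ T) (hnT2 : wsucc n (wsucc n j) ∉ T)
    (hm1 : 1 ≤ m) (hmK : m ≤ K) (hV : VW n T j m) :
    CW n x T j m + dW n x (wsucc n j) ≤ wqW n x j := by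
  have hjI : j ∈ Icc 1 (n-1) := hT hj
  -- m < K, else prW n j (K-1) = wsucc (wsucc j) ∈ T
  have hmK' : m < K := by
    rcases Nat.lt_or_ge m K with h | h
    · exact h
    · exfalso
      have hmk : m = K := by omega
      have := hV (K-1) (mem_Icc.mpr ⟨by omega, by omega⟩)
      rw [pr_Km1 hn hNK hK2 hjI rfl] at this
      exact hnT2 this
  set Gm := (range m).image (fun s => gpW n j (s+1)) with hGm
  set GI := insert (wsucc n j) Gm with hGI
  set Gpos := GI.filter (fun g => 0 < wqW n x g) with hGpos
  set Pm := (range m).image (fun s => prW n j s) with hPm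
  have hVT : ∀ s, s < m → prW n j s ∈ T := by
    intro s hs
    rcases Nat.eq_zero_or_pos s with rfl | hpos
    · rw [pr_zero hn hjI]; exact hj
    · exact hV s (mem_Icc.mpr ⟨hpos, by omega⟩)
  set Pend := (if prW n j m ∈ T then ({prW n j m} : Finset ℕ) else ∅) with hPend
  set P := Pm ∪ Pend with hP
  have hPmT : Pm ⊆ T := by
    intro p hp
    obtain ⟨s, hs, rfl⟩ := mem_image.mp hp
    exact hVT s (mem_range.mp hs)
  have hPT2 : P ⊆ T := by
    intro p hp
    rcases mem_union.mp hp with h | h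
    · exact hPmT h
    · rw [hPend] at h
      split_ifs at h with hc
      · rw [mem_singleton.mp h]; exact hc
      · simp at h
  have hGmem : ∀ g ∈ Gpos, g = wsucc n j ∨ ∃ s, s < m ∧ g = gpW n j (s+1) := by
    intro g hg
    rcases mem_insert.mp (mem_filter.mp hg).1 with h | h
    · exact Or.inl h
    · obtain ⟨s, hs, rfl⟩ := mem_image.mp h
      exact Or.inr ⟨s, mem_range.mp hs, rfl⟩
  have hkey : ∑ g ∈ Gpos, wqW n x g ≤ ∑ p ∈ P, wqW n x p := by
    apply keyW hn hT hP1 hP2 hP3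
    · exact hPT2
    · intro g hg
      rcases hGmem g hg with rfl | ⟨s, _, rfl⟩
      · exact wsucc_mem hn hjI
      · exact gp_mem hn j (s+1)
    · intro g hg
      rcases hGmem g hg with rfl | ⟨s, hs, rfl⟩
      · exact indep_succ hP1 j hj
      · intro hgT
        exact indep_succ hP1 _ hgT (by rw [wsucc_gp hn]; exact hVT s hs)
    · intro g hg
      rcases hGmem g hg with rfl | ⟨s, hs, rfl⟩
      · intro hc
        rcases mem_insert.mp (mem_filter.mp hc).1 with h | h
        · exact wsucc_ne hn (wsucc_mem hn hjI) h
        · obtain ⟨s, hs, hceq⟩ := mem_image.mp h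
          simp only [mem_range] at hs
          exact wsucc2_ne_gp hn hNK hjI (by omega) (by omega) hceq.symm
      · intro hc
        rw [wsucc_gp hn] at hc
        rcases mem_insert.mp (mem_filter.mp hc).1 with h | h
        · exact pr_ne_wsucc hn hNK hjI (by omega) h
        · obtain ⟨s', hs', hceq⟩ := mem_image.mp h
          simp only [mem_range] at hs'
          exact pr_ne_gp hn hNK (by omega) (by omega) (by omega) hceq.symm
    · intro g hg
      rcases hGmem g hg with rfl | ⟨s, hs, rfl⟩
      · rw [wpred_wsucc hn hjI]
        intro _
        refine mem_union.mpr (Or.inl ?_)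
        rw [← pr_zero hn hjI]
        exact mem_image.mpr ⟨0, mem_range.mpr (by omega), rfl⟩
      · rw [wpred_gp hn]
        intro hpT
        rcases Nat.lt_or_ge (s+1) m with hlt | hge
        · exact mem_union.mpr (Or.inl (mem_image.mpr ⟨s+1, mem_range.mpr hlt, rfl⟩))
        · have hsm : s + 1 = m := by omega
          rw [hsm] at hpT ⊢
          refine mem_union.mpr (Or.inr ?_)
          rw [hPend, if_pos hpT]
          exact mem_singleton_self _
    · intro g hg
      rcases hGmem g hg with rfl | ⟨s, hs, rfl⟩
      · intro hc
        exact absurd hc hnT2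
      · rw [wsucc_gp hn]
        intro _
        exact mem_union.mpr (Or.inl (mem_image.mpr ⟨s, mem_range.mpr hs, rfl⟩))
  have hinjG : ∀ s₁ ∈ range m, ∀ s₂ ∈ range m, gpW n j (s₁+1) = gpW n j (s₂+1) → s₁ = s₂ := by
    intro s₁ hs₁ s₂ hs₂ h
    simp only [mem_range] at hs₁ hs₂
    exact gp_inj hn hNK (by omega) (by omega) h
  have hinjP : ∀ s₁ ∈ range m, ∀ s₂ ∈ range m, prW n j s₁ = prW n j s₂ → s₁ = s₂ := by
    intro s₁ hs₁ s₂ hs₂ h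
    simp only [mem_range] at hs₁ hs₂
    exact pr_inj hn hNK (by omega) (by omega) h
  have hnotmem : wsucc n j ∉ Gm := by
    intro h
    obtain ⟨s, hs, hceq⟩ := mem_image.mp h
    simp only [mem_range] at hs
    exact wsucc_ne_gp hn hNK hjI (by omega) (by omega) hceq.symm
  have hsum1 : ∑ g ∈ Gm, dW n x g = ∑ s ∈ range m, dW n x (gpW n j (s+1)) :=
    sum_image hinjG
  have hsum2 : ∑ g ∈ Gpos, wqW n x g = dW n x (wsucc n j) + ∑ g ∈ Gm, dW n x g := by
    rw [hGpos, sum_filter, hGI, sum_insert hnotmem]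
    have hterm : ∀ g : ℕ, (if 0 < wqW n x g then wqW n x g else 0) = dW n x g := by
      intro g
      unfold dW
      split_ifs with h
      · exact (max_eq_right (le_of_lt h)).symm
      · push_neg at h
        exact (max_eq_left h).symm
    rw [hterm]
    congr 1
    exact sum_congr rfl (fun g _ => hterm g)
  have hsum3 : ∑ p ∈ P, wqW n x p
      ≤ (∑ s ∈ range m, wqW n x (prW n j s)) + rhoW n x T (prW n j m) := by
    have hPmsum : ∑ p ∈ Pm, wqW n x p = ∑ s ∈ range m, wqW n x (prW n j s) :=
      sum_image hinjP
    rw [hP, hPend]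
    unfold rhoW
    split_ifs with hmemT
    · by_cases hin : prW n j m ∈ Pm
      · rw [union_eq_left.mpr (by simpa using hin)]
        have h0 := wq_nonnegT hn hT hP1 hP2 hP3 _ hmemT
        rw [hPmsum]
        linarith
      · rw [sum_union (by simp [disjoint_singleton_right, hin]), sum_singleton, hPmsum]
    · rw [union_empty, hPmsum]
      simp
  have hsum4 : ∑ s ∈ range m, wqW n x (prW n j s)
      = wqW n x j + ∑ s ∈ range (m-1), wqW n x (prW n j (s+1)) := by
    obtain ⟨m', rfl⟩ : ∃ m', m = m'+1 := ⟨m-1, by omega⟩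
    rw [Finset.sum_range_succ']
    rw [pr_zero hn hjI]
    simp [add_comm]
  unfold CW
  linarith
end Chain4


section Alpha
variable {n : ℕ} {x : ℕ → ℝ} {T : Finset ℕ}

lemma mem_alphaSet (hn : 5 ≤ n) {j m : ℕ}
    (h : m ∈ insert 1 ((Icc 1 ((n-1)/2)).filter (fun m => VW n T j m))) :
    1 ≤ m ∧ m ≤ (n-1)/2 ∧ VW n T j m := by
  rcases mem_insert.mp h with rfl | h
  · refine ⟨le_refl 1, by omega, ?_⟩
    intro s hs
    simp at hs
  · obtain ⟨h1, h2⟩ := mem_filter.mp h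
    simp only [mem_Icc] at h1
    exact ⟨h1.1, h1.2, h2⟩

lemma alphaSet_mem (hn : 5 ≤ n) {j m : ℕ} (hm1 : 1 ≤ m) (hmK : m ≤ (n-1)/2)
    (hV : VW n T j m) :
    m ∈ insert 1 ((Icc 1 ((n-1)/2)).filter (fun m => VW n T j m)) :=
  mem_insert_of_mem (mem_filter.mpr ⟨mem_Icc.mpr ⟨hm1, hmK⟩, hV⟩)

lemma alpha_nonneg (n : ℕ) (x : ℕ → ℝ) (T : Finset ℕ) (j : ℕ) :
    0 ≤ alphaW n x T j := le_max_left _ _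

lemma alpha_ge (hn : 5 ≤ n) {j m : ℕ} (hm1 : 1 ≤ m) (hmK : m ≤ (n-1)/2)
    (hV : VW n T j m) : CW n x T j m ≤ alphaW n x T j :=
  le_trans (Finset.le_sup' (CW n x T j) (alphaSet_mem hn hm1 hmK hV)) (le_max_right _ _)

lemma alpha_le_wq (hn : 5 ≤ n) {K : ℕ} (hNK : n - 1 = 2*K)
    (hT : T ⊆ Finset.Icc 1 (n - 1))
    (hP1 : T ∩ T.image (wsucc n) = ∅) (hP2 : phiW n x T = phiStarW n x)
    (hP3 : ∀ i ∈ T, 1 ≤ x i + x (wsucc n i) + x n ∧ x i + x (wsucc n i) + x n ≤ 2)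
    {j : ℕ} (hj : j ∈ T) : alphaW n x T j ≤ wqW n x j := by
  unfold alphaW
  apply max_le (wq_nonnegT hn hT hP1 hP2 hP3 j hj)
  apply Finset.sup'_le
  intro m hm
  obtain ⟨hm1, hmK, hV⟩ := mem_alphaSet hn hm
  exact D1 hn hNK hT hP1 hP2 hP3 hj hm1 (by omega) hV

lemma cast_pr_one (hn : 5 ≤ n) (j : ℕ) :
    (j : ZMod (n-1)) = ((prW n j 1 : ℕ) : ZMod (n-1)) + 2 := by
  have := cast_posW hn ((j : ZMod (n-1)) - ((2*1 : ℕ) : ZMod (n-1)))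
  unfold prW
  rw [this]
  push_cast
  ring

lemma VW_tail (hn : 5 ≤ n) {j m : ℕ} (hV : VW n T j m) (hm2 : 2 ≤ m) :
    VW n T (prW n j 1) (m-1) := by
  intro s hs
  simp only [mem_Icc] at hs
  have := pr_shift hn (cast_pr_one hn j) s
  rw [← this]
  exact hV (s+1) (mem_Icc.mpr ⟨by omega, by omega⟩)

lemma alpha_le_d (hn : 5 ≤ n) {K : ℕ} (hNK : n - 1 = 2*K)
    (hT : T ⊆ Finset.Icc 1 (n - 1))
    (hP1 : T ∩ T.image (wsucc n) = ∅) (hP2 : phiW n x T = phiStarW n x)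
    (hP3 : ∀ i ∈ T, 1 ≤ x i + x (wsucc n i) + x n ∧ x i + x (wsucc n i) + x n ≤ 2)
    {j : ℕ} (hj : j ∈ T) : alphaW n x T j ≤ dW n x (wpred n j) := by
  have hjI : j ∈ Icc 1 (n-1) := hT hj
  unfold alphaW
  apply max_le (dW_nonneg n x _)
  apply Finset.sup'_le
  intro m hm
  obtain ⟨hm1, hmK, hV⟩ := mem_alphaSet hn hm
  rcases Nat.lt_or_ge m 2 with hm2 | hm2
  · have : m = 1 := by omega
    subst this
    rw [CW_one hn hjI]
    have := rho_nonneg hn hT hP1 hP2 hP3 (prW n j 1)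
    linarith
  · -- m ≥ 2
    obtain ⟨m', rfl⟩ : ∃ m', m = m'+1 := ⟨m-1, by omega⟩
    have hj1T : prW n j 1 ∈ T := hV 1 (mem_Icc.mpr ⟨le_refl 1, by omega⟩)
    have hshift := CW_shift (T := T) (x := x) hn (cast_pr_one hn j) (by omega : 1 ≤ m')
    have hD1 : CW n x T (prW n j 1) m' ≤ wqW n x (prW n j 1) := by
      apply D1 hn hNK hT hP1 hP2 hP3 hj1T (by omega) (by omega)
      have := VW_tail hn hV (by omega)
      simpa using this
    have hgp1 : gpW n j 1 = wpred n j := gp_one hn hjI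
    rw [hshift, hgp1]
    linarith
end Alpha


section Alpha2
variable {n : ℕ} {x : ℕ → ℝ} {T : Finset ℕ}

lemma VW_one (n : ℕ) (T : Finset ℕ) (j : ℕ) : VW n T j 1 := by
  intro s hs
  simp at hs

lemma alpha_ge_d (hn : 5 ≤ n)
    (hT : T ⊆ Finset.Icc 1 (n - 1))
    {j : ℕ} (hj : j ∈ T) (hpp : wpred n (wpred n j) ∉ T) :
    dW n x (wpred n j) ≤ alphaW n x T j := by
  have hjI : j ∈ Icc 1 (n-1) := hT hj
  have hC : CW n x T j 1 = dW n x (wpred n j) := by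
    rw [CW_one hn hjI]
    unfold rhoW
    rw [pr_one hn hjI, if_neg hpp]
    ring
  have := alpha_ge (x := x) hn (le_refl 1) (by omega) (VW_one n T j)
  rwa [hC] at this

lemma alpha_rec (hn : 5 ≤ n) {K : ℕ} (hNK : n - 1 = 2*K)
    (hT : T ⊆ Finset.Icc 1 (n - 1))
    (hP1 : T ∩ T.image (wsucc n) = ∅) (hP2 : phiW n x T = phiStarW n x)
    (hP3 : ∀ i ∈ T, 1 ≤ x i + x (wsucc n i) + x n ∧ x i + x (wsucc n i) + x n ≤ 2)
    {j : ℕ} (hj : j ∈ T) (hj2T : wsucc n (wsucc n j) ∈ T) :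
    alphaW n x T j + dW n x (wsucc n j) - wqW n x j
      ≤ alphaW n x T (wsucc n (wsucc n j)) := by
  have hjI : j ∈ Icc 1 (n-1) := hT hj
  have hj2I : wsucc n (wsucc n j) ∈ Icc 1 (n-1) := hT hj2T
  have hcast2 : ((wsucc n (wsucc n j) : ℕ) : ZMod (n-1)) = (j : ZMod (n-1)) + 2 := by
    rw [wsucc2_eq hn hjI, cast_posW hn]
  have hwpj2 : wpred n (wsucc n (wsucc n j)) = wsucc n j :=
    wpred_wsucc hn (wsucc_mem hn hjI)
  have hprj2 : prW n (wsucc n (wsucc n j)) 1 = j := by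
    have h0 := pr_shift hn hcast2 0
    rwa [pr_zero hn hjI] at h0
  have hC1 : CW n x T (wsucc n (wsucc n j)) 1 = dW n x (wsucc n j) - wqW n x j := by
    rw [CW_one hn hj2I, hwpj2, hprj2]
    unfold rhoW
    rw [if_pos hj]
  have halpha2 : CW n x T (wsucc n (wsucc n j)) 1 ≤ alphaW n x T (wsucc n (wsucc n j)) :=
    alpha_ge hn (le_refl 1) (by omega) (VW_one n T _)
  set S := (insert 1 ((Icc 1 ((n-1)/2)).filter (fun m => VW n T j m))).sup'
    (insert_nonempty _ _) (CW n x T j) with hS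
  have haj : alphaW n x T j = max 0 S := rfl
  rcases le_total S 0 with hle | hle
  · rw [haj, max_eq_left hle]
    linarith
  · rw [haj, max_eq_right hle]
    obtain ⟨m, hm, hSm⟩ := Finset.exists_mem_eq_sup'
      (insert_nonempty 1 ((Icc 1 ((n-1)/2)).filter (fun m => VW n T j m))) (CW n x T j)
    rw [← hS] at hSm
    obtain ⟨hm1, hmK, hV⟩ := mem_alphaSet hn hm
    rcases Nat.lt_or_ge m K with hmlt | hmge
    · have hVj2 : VW n T (wsucc n (wsucc n j)) (m+1) := by
        intro s hs
        simp only [mem_Icc, Nat.add_sub_cancel] at hs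
        rcases Nat.lt_or_ge s 2 with h2 | h2
        · have hs1 : s = 1 := by omega
          rw [hs1, hprj2]
          exact hj
        · obtain ⟨s', rfl⟩ : ∃ s', s = s'+1 := ⟨s-1, by omega⟩
          rw [pr_shift hn hcast2 s']
          exact hV s' (mem_Icc.mpr ⟨by omega, by omega⟩)
      have hCshift := CW_shift (x := x) (T := T) hn hcast2 hm1
      have hgpj2 : gpW n (wsucc n (wsucc n j)) 1 = wsucc n j := by
        rw [gp_one hn hj2I, hwpj2]
      have halx := alpha_ge (x := x) hn (by omega : 1 ≤ m+1) (by omega) hVj2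
      rw [hCshift, hgpj2, hprj2] at halx
      linarith
    · have hmk : m = K := by omega
      subst hmk
      have hD1K := D1K hn hNK hT hP1 hP2 hP3 hj (by omega) hV
      linarith

lemma alpha_end (hn : 5 ≤ n) {K : ℕ} (hNK : n - 1 = 2*K)
    (hT : T ⊆ Finset.Icc 1 (n - 1))
    (hP1 : T ∩ T.image (wsucc n) = ∅) (hP2 : phiW n x T = phiStarW n x)
    (hP3 : ∀ i ∈ T, 1 ≤ x i + x (wsucc n i) + x n ∧ x i + x (wsucc n i) + x n ≤ 2)
    {j : ℕ} (hj : j ∈ T) (hnT2 : wsucc n (wsucc n j) ∉ T) :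
    alphaW n x T j + dW n x (wsucc n j) ≤ wqW n x j := by
  have hjI : j ∈ Icc 1 (n-1) := hT hj
  have hd : dW n x (wsucc n j) ≤ wqW n x j := by
    rcases le_or_gt (wqW n x (wsucc n j)) 0 with h | h
    · rw [show dW n x (wsucc n j) = 0 from max_eq_left h]
      exact wq_nonnegT hn hT hP1 hP2 hP3 j hj
    · have hkey := keyW hn hT hP1 hP2 hP3 {j} {wsucc n j} (by simpa using hj)
        (by intro g hg; rw [mem_singleton.mp hg]; exact wsucc_mem hn hjI)
        (by intro g hg; rw [mem_singleton.mp hg]; exact indep_succ hP1 j hj)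
        (by intro g hg
            rw [mem_singleton.mp hg]
            simp only [mem_singleton]
            exact wsucc_ne hn (wsucc_mem hn hjI))
        (by intro g hg
            rw [mem_singleton.mp hg, wpred_wsucc hn hjI]
            intro _
            exact mem_singleton_self j)
        (by intro g hg
            rw [mem_singleton.mp hg]
            intro hc
            exact absurd hc hnT2)
      simp only [sum_singleton] at hkey
      rw [show dW n x (wsucc n j) = wqW n x (wsucc n j) from max_eq_right (le_of_lt h)]
      exact hkey
  unfold alphaW
  rcases le_total ((insert 1 ((Icc 1 ((n-1)/2)).filter (fun m => VW n T j m))).sup'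
      (insert_nonempty _ _) (CW n x T j)) 0 with h | h
  · rw [max_eq_left h]
    linarith
  · rw [max_eq_right h]
    have hsup : (insert 1 ((Icc 1 ((n-1)/2)).filter (fun m => VW n T j m))).sup'
        (insert_nonempty _ _) (CW n x T j) ≤ wqW n x j - dW n x (wsucc n j) := by
      apply Finset.sup'_le
      intro m hm
      obtain ⟨hm1, hmK, hV⟩ := mem_alphaSet hn hm
      have := D5core hn hNK (by omega) hT hP1 hP2 hP3 hj hnT2 hm1 (by omega) hV
      linarith
    linarith
end Alpha2


theorem zSystem_feasible (n : ℕ) (hn : 5 ≤ n) (heven : Even (n - 1)) (x : ℕ → ℝ)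
    (hx : ∀ i ∈ Finset.Icc 1 n, 0 ≤ x i ∧ x i ≤ 1)
    (T : Finset ℕ) (hT : T ⊆ Finset.Icc 1 (n - 1))
    (hP1 : T ∩ T.image (wsucc n) = ∅)
    (hP2 : phiW n x T = phiStarW n x)
    (hP3 : ∀ i ∈ T, 1 ≤ x i + x (wsucc n i) + x n ∧ x i + x (wsucc n i) + x n ≤ 2)
    (hP4 : ∀ i ∈ Finset.Icc 1 (n - 1),
      1 ≤ x i + x (wsucc n i) + x n → x i + x (wsucc n i) + x n ≤ 2 →
        (wpred n i ∈ T ∨ i ∈ T ∨ wsucc n i ∈ T)) :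
    ∃ z : ℕ → ℝ, zSystem n x T z := by
  obtain ⟨K, hNK⟩ : ∃ K, n - 1 = 2 * K := by
    obtain ⟨k, hk⟩ := heven
    exact ⟨k, by omega⟩
  have hxn : 0 ≤ x n ∧ x n ≤ 1 := hx n (mem_Icc.mpr ⟨by omega, le_refl n⟩)
  have hxb : ∀ i ∈ Icc 1 (n-1), 0 ≤ x i ∧ x i ≤ 1 := by
    intro i hi
    simp only [mem_Icc] at hi
    exact hx i (mem_Icc.mpr ⟨hi.1, by omega⟩)
  have hkA : ∀ i ∈ Icc 1 (n-1),
      dW n x i ≤ MW n x (wsucc n i) - mW n x (wsucc n i) := by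
    intro i hi
    have h1 := hxb i hi
    have h2 := hxb _ (wsucc_mem hn hi)
    unfold dW wqW eqW sqW MW mW
    exact g1 (x i) (x (wsucc n i)) (x n) h1.1 h1.2 h2.1 h2.2 hxn.1 hxn.2
  have hkB : ∀ i ∈ Icc 1 (n-1), dW n x i ≤ MW n x i - mW n x i := by
    intro i hi
    have h1 := hxb i hi
    have h2 := hxb _ (wsucc_mem hn hi)
    unfold dW wqW eqW sqW MW mW
    exact g2 (x i) (x (wsucc n i)) (x n) h1.1 h1.2 h2.1 h2.2 hxn.1 hxn.2
  have hkC : ∀ i ∈ Icc 1 (n-1),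
      dW n x i ≤ x n + eqW n x i - sqW n x i - sqW n x (wsucc n i) := by
    intro i hi
    have h1 := hxb i hi
    have h2 := hxb _ (wsucc_mem hn hi)
    unfold dW wqW eqW sqW
    exact g3 (x i) (x (wsucc n i)) (x n) h1.1 h1.2 h2.1 h2.2 hxn.1 hxn.2
  have hidR : ∀ i, MW n x i + MW n x (wsucc n i) - M'W n x i = wqW n x i := by
    intro i
    unfold MW M'W wqW eqW sqW
    rw [g5 (x i) 0 (x n), g5 (x (wsucc n i)) 0 (x n), g6 (x i) (x (wsucc n i))]
    ring
  have hidL : ∀ i, MW n x i + MW n x (wsucc n i) - m'W n x i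
      = x n + eqW n x i - sqW n x i - sqW n x (wsucc n i) := by
    intro i
    unfold MW m'W eqW sqW
    rw [g5 (x i) 0 (x n), g5 (x (wsucc n i)) 0 (x n), g7 (x i) (x (wsucc n i))]
    ring
  have hiso : ∀ i ∈ Icc 1 (n-1), i ∉ T → wpred n i ∉ T → wsucc n i ∉ T →
      wqW n x i ≤ 0 := by
    intro i hi hiT hpT hsT
    have h1 := hxb i hi
    have h2 := hxb _ (wsucc_mem hn hi)
    by_cases hc : (1 ≤ x i + x (wsucc n i) + x n) ∧ (x i + x (wsucc n i) + x n ≤ 2)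
    · rcases hP4 i hi hc.1 hc.2 with h | h | h
      · exact absurd h hpT
      · exact absurd h hiT
      · exact absurd h hsT
    · have h3 : ¬(1 ≤ x i + x (wsucc n i) + x n) ∨ ¬(x i + x (wsucc n i) + x n ≤ 2) := by
        tauto
      unfold wqW eqW sqW
      exact g4 (x i) (x (wsucc n i)) (x n) h1.1 h1.2 h2.1 h2.2 hxn.1 hxn.2 h3
  have hdnn : ∀ i, 0 ≤ deltaW n x T i := by
    intro i
    unfold deltaW
    split_ifs
    · exact alpha_nonneg n x T i
    · exact le_max_left _ _
    · exact le_refl 0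
  have hdT : ∀ j, j ∈ T → deltaW n x T j = alphaW n x T j := by
    intro j hj
    unfold deltaW
    rw [if_pos hj]
  have hdS2 : ∀ i, i ∉ T → wpred n i ∈ T →
      deltaW n x T i = betaW n x T (wpred n i) := by
    intro i h1 h2
    unfold deltaW
    rw [if_neg h1, if_pos h2]
  have hd0 : ∀ i, i ∉ T → wpred n i ∉ T → deltaW n x T i = 0 := by
    intro i h1 h2
    unfold deltaW
    rw [if_neg h1, if_neg h2]
  have hbeta_eq : ∀ i ∈ Icc 1 (n-1), betaW n x T (wpred n i)
      = max 0 (dW n x i - (if wsucc n i ∈ T then alphaW n x T (wsucc n i) else 0)) := by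
    intro i hi
    unfold betaW
    rw [wsucc_wpred hn hi]
  have hbeta_le : ∀ i ∈ Icc 1 (n-1), betaW n x T (wpred n i) ≤ dW n x i := by
    intro i hi
    rw [hbeta_eq i hi]
    apply max_le (dW_nonneg n x i)
    split_ifs with h
    · have := alpha_nonneg n x T (wsucc n i)
      linarith
    · simp
  refine ⟨fun i => MW n x i - deltaW n x T i, ?_, ?_, ?_, ?_, ?_⟩
  · -- clause 1 : m ≤ z on S
    intro i hi
    simp only
    rcases mem_union.mp hi with hiT | hiI
    · have hjI : i ∈ Icc 1 (n-1) := hT hiT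
      rw [hdT i hiT]
      have h1 := alpha_le_d hn hNK hT hP1 hP2 hP3 hiT
      have h2 := hkA _ (wpred_mem hn hjI)
      rw [wsucc_wpred hn hjI] at h2
      linarith
    · obtain ⟨j, hj, hji⟩ := mem_image.mp hiI
      have hjI : j ∈ Icc 1 (n-1) := hT hj
      have hiIcc : i ∈ Icc 1 (n-1) := hji ▸ wsucc_mem hn hjI
      by_cases hiT : i ∈ T
      · rw [hdT i hiT]
        have h1 := alpha_le_d hn hNK hT hP1 hP2 hP3 hiT
        have h2 := hkA _ (wpred_mem hn hiIcc)
        rw [wsucc_wpred hn hiIcc] at h2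
        linarith
      · have hpredT : wpred n i ∈ T := by
          rw [← hji, wpred_wsucc hn hjI]
          exact hj
        rw [hdS2 i hiT hpredT]
        have h1 := hbeta_le i hiIcc
        have h2 := hkB i hiIcc
        linarith
  · -- clause 2 : z = M off S
    intro i hi
    obtain ⟨hiI, hiS⟩ := mem_sdiff.mp hi
    simp only
    have hiT : i ∉ T := fun hc => hiS (mem_union.mpr (Or.inl hc))
    have hpT : wpred n i ∉ T := by
      intro hc
      apply hiS
      refine mem_union.mpr (Or.inr (mem_image.mpr ⟨wpred n i, hc, ?_⟩))
      exact wsucc_wpred hn hiI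
    rw [hd0 i hiT hpT]
    simp
  · -- clause 3 : z ≤ M
    intro i _
    simp only
    have := hdnn i
    linarith
  · -- clause 4 : pairs in T
    intro j hj
    simp only
    have hjI : j ∈ Icc 1 (n-1) := hT hj
    have hsjI : wsucc n j ∈ Icc 1 (n-1) := wsucc_mem hn hjI
    have hsjT : wsucc n j ∉ T := indep_succ hP1 j hj
    have hpsj : wpred n (wsucc n j) = j := wpred_wsucc hn hjI
    have hdelta_sj : deltaW n x T (wsucc n j) = betaW n x T j := by
      rw [hdS2 _ hsjT (by rw [hpsj]; exact hj), hpsj]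
    rw [hdT j hj, hdelta_sj]
    have hkey : alphaW n x T j + betaW n x T j ≤ wqW n x j := by
      unfold betaW
      split_ifs with hc
      · rcases le_total (dW n x (wsucc n j) - alphaW n x T (wsucc n (wsucc n j))) 0
          with h | h
        · rw [max_eq_left h]
          have := alpha_le_wq hn hNK hT hP1 hP2 hP3 hj
          linarith
        · rw [max_eq_right h]
          have := alpha_rec hn hNK hT hP1 hP2 hP3 hj hc
          linarith
      · rw [sub_zero, max_eq_right (dW_nonneg n x _)]
        exact alpha_end hn hNK hT hP1 hP2 hP3 hj hc
    have hid := hidR j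
    linarith
  · -- clause 5 : gaps
    intro i hi
    obtain ⟨hiI, hiT⟩ := mem_sdiff.mp hi
    simp only
    have hsiI : wsucc n i ∈ Icc 1 (n-1) := wsucc_mem hn hiI
    have hidr := hidR i
    have hidl := hidL i
    have hdle := hkC i hiI
    have hwd : wqW n x i ≤ dW n x i := wq_le_dW n x i
    have hd0i : (0:ℝ) ≤ dW n x i := dW_nonneg n x i
    -- δ (wsucc i) evaluation
    by_cases hsT : wsucc n i ∈ T
    · -- right pair exists
      have hds : deltaW n x T (wsucc n i) = alphaW n x T (wsucc n i) := hdT _ hsT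
      have halle : alphaW n x T (wsucc n i) ≤ dW n x i := by
        have h1 := alpha_le_d hn hNK hT hP1 hP2 hP3 hsT
        rwa [wpred_wsucc hn hiI] at h1
      by_cases hpT : wpred n i ∈ T
      · -- both sides
        have hdi : deltaW n x T i
            = max 0 (dW n x i - alphaW n x T (wsucc n i)) := by
          rw [hdS2 i hiT hpT, hbeta_eq i hiI, if_pos hsT]
        rw [hdi, hds]
        have hsum : max 0 (dW n x i - alphaW n x T (wsucc n i))
            + alphaW n x T (wsucc n i) = max (alphaW n x T (wsucc n i)) (dW n x i) := by
          rcases le_total (dW n x i - alphaW n x T (wsucc n i)) 0 with h | h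
          · rw [max_eq_left h, max_eq_left (by linarith)]
            ring
          · rw [max_eq_right h, max_eq_right (by linarith)]
            ring
        constructor
        · -- lower : z-sum ≥ m' ⟺ δ-sum ≤ L
          have : max (alphaW n x T (wsucc n i)) (dW n x i) ≤ dW n x i :=
            max_le halle (le_refl _)
          have h5 : max 0 (dW n x i - alphaW n x T (wsucc n i))
              + alphaW n x T (wsucc n i) ≤ dW n x i := by
            rw [hsum]; exact this
          linarith
        · -- upper : z-sum ≤ M' ⟺ δ-sum ≥ wq
          have h5 : dW n x i ≤ max 0 (dW n x i - alphaW n x T (wsucc n i))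
              + alphaW n x T (wsucc n i) := by
            rw [hsum]; exact le_max_right _ _
          linarith
      · -- right only
        have hdi : deltaW n x T i = 0 := hd0 i hiT hpT
        have hal_ge : dW n x i ≤ alphaW n x T (wsucc n i) := by
          have h1 : wpred n (wpred n (wsucc n i)) ∉ T := by
            rw [wpred_wsucc hn hiI]
            exact hpT
          have h2 := alpha_ge_d (x := x) hn hT hsT h1
          rwa [wpred_wsucc hn hiI] at h2
        rw [hdi, hds]
        constructor
        · linarith
        · linarith
    · -- no right pair
      have hds : deltaW n x T (wsucc n i) = 0 := by
        apply hd0 _ hsT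
        rw [wpred_wsucc hn hiI]
        exact hiT
      by_cases hpT : wpred n i ∈ T
      · -- left only
        have hdi : deltaW n x T i = dW n x i := by
          rw [hdS2 i hiT hpT, hbeta_eq i hiI, if_neg hsT, sub_zero,
            max_eq_right hd0i]
        rw [hdi, hds]
        constructor
        · linarith
        · linarith
      · -- isolated gap
        have hdi : deltaW n x T i = 0 := hd0 i hiT hpT
        have hwq0 := hiso i hiI hiT hpT hsT
        rw [hdi, hds]
        constructor
        · linarith
        · linarith
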